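/- (Approximate multiplicative closure of symmetry sets) Let G act on X and Y ⊆ X finite. Suppose A is a nonempty finite subset of Sym_α(Y) := {g ∈ G : |Y ∩ gY| ≥ α|Y|}, where 0 < α ≤ 1. Then there exists a set P ⊆ A × A with |P| ≥ (α²/2)|A|² such that for every (s, s') ∈ P, both s⁻¹s' and s'⁻¹s lie in Sym_{α²/2}(Y). -/

import Mathlib

open scoped Classical
open Finset

lemma key_lemma {G X : Type*} [Group G] [MulAction G X] (Y : Finset X) (s s' : G) :
    (Y ∩ Y.image (fun y => s • y) ∩ Y.image (fun y => s' • y)).card ≤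
      (Y ∩ Y.image (fun y => (s⁻¹ * s') • y)).card := by
  classical
  apply Finset.card_le_card_of_injOn (fun x => s⁻¹ • x)
  · intro x hx
    simp only [Finset.mem_coe, Finset.mem_inter, Finset.mem_image] at hx ⊢
    obtain ⟨⟨hxY, y, hy, hsy⟩, y', hy', hsy'⟩ := hx
    constructor
    · subst hsy; simpa using hy
    · exact ⟨y', hy', by rw [← hsy', mul_smul]⟩
  · intro a _ b _ h
    exact smul_left_cancel s⁻¹ h

theorem stmt4 {G X : Type*} [Group G] [MulAction G X]
    (A : Finset G) (Y : Finset X) (hA : A.Nonempty) (hY : Y.Nonempty)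
    (α : ℝ) (hα0 : 0 < α) (hα1 : α ≤ 1)
    (hsym : ∀ a ∈ A, α * Y.card ≤ ((Y ∩ Y.image (fun y => a • y)).card : ℝ)) :
    ∃ P ⊆ A ×ˢ A, (α ^ 2 / 2) * (A.card : ℝ) ^ 2 ≤ P.card ∧
      ∀ p ∈ P,
        (α ^ 2 / 2) * Y.card ≤ ((Y ∩ Y.image (fun y => (p.1⁻¹ * p.2) • y)).card : ℝ) ∧
        (α ^ 2 / 2) * Y.card ≤ ((Y ∩ Y.image (fun y => (p.2⁻¹ * p.1) • y)).card : ℝ) := by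
  classical
  set c : G × G → ℕ := fun p => (Y ∩ Y.image (fun y => p.1 • y) ∩ Y.image (fun y => p.2 • y)).card with hc
  set d : X → ℕ := fun y => (A.filter (fun s => y ∈ Y.image (fun z => s • z))).card with hd
  have hYpos : (0 : ℝ) < Y.card := by exact_mod_cast hY.card_pos
  -- step: single-set cards as filters
  have hfilter : ∀ s : G, (Y.filter (fun y => y ∈ Y.image (fun z => s • z))).card
      = (Y ∩ Y.image (fun y => s • y)).card := by
    intro s
    rw [Finset.filter_mem_eq_inter]
  -- sum of d
  have hsumd : ∑ y ∈ Y, (d y : ℝ) = ∑ s ∈ A, ((Y ∩ Y.image (fun y => s • y)).card : ℝ) := by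
    push_cast
    rw [← Nat.cast_sum, ← Nat.cast_sum]
    congr 1
    simp only [hd, Finset.card_filter]
    rw [Finset.sum_comm]
    refine Finset.sum_congr rfl fun s _ => ?_
    rw [← Finset.card_filter, hfilter]
  -- sum of c over A ×ˢ A
  have hsumc : ∑ p ∈ A ×ˢ A, (c p : ℝ) = ∑ y ∈ Y, (d y : ℝ) ^ 2 := by
    rw [← Nat.cast_sum]
    have : ∑ p ∈ A ×ˢ A, c p = ∑ y ∈ Y, d y * d y := by
      have hc2 : ∀ p : G × G, c p = ∑ y ∈ Y,
          (if y ∈ Y.image (fun z => p.1 • z) ∧ y ∈ Y.image (fun z => p.2 • z) then 1 else 0) := by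
        intro p
        rw [← Finset.card_filter]
        have he : Y ∩ Y.image (fun y => p.1 • y) ∩ Y.image (fun y => p.2 • y)
            = Y.filter (fun y => y ∈ Y.image (fun z => p.1 • z) ∧ y ∈ Y.image (fun z => p.2 • z)) := by
          ext y
          simp [Finset.mem_filter, Finset.mem_inter, and_assoc]
        simp only [hc]
        rw [he]
      simp only [hc2]
      rw [Finset.sum_comm]
      refine Finset.sum_congr rfl fun y _ => ?_
      rw [← Finset.card_filter]
      have : (A ×ˢ A).filter (fun p => y ∈ Y.image (fun z => p.1 • z) ∧ y ∈ Y.image (fun z => p.2 • z))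
          = (A.filter (fun s => y ∈ Y.image (fun z => s • z))) ×ˢ (A.filter (fun s => y ∈ Y.image (fun z => s • z))) := by
        ext p
        simp [Finset.mem_filter, Finset.mem_product]
        tauto
      rw [this, Finset.card_product]
    rw [this]
    push_cast
    ring_nf
  -- lower bound on sum of d
  have hlb : α * A.card * Y.card ≤ ∑ y ∈ Y, (d y : ℝ) := by
    rw [hsumd]
    calc α * A.card * Y.card = ∑ _s ∈ A, α * Y.card := by
          rw [Finset.sum_const, nsmul_eq_mul]; ring
      _ ≤ _ := Finset.sum_le_sum fun s hs => hsym s hs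
  -- Cauchy-Schwarz
  have hCS : (∑ y ∈ Y, (d y : ℝ)) ^ 2 ≤ (Y.card : ℝ) * ∑ y ∈ Y, (d y : ℝ) ^ 2 :=
    sq_sum_le_card_mul_sum_sq
  have hmain : α ^ 2 * (A.card : ℝ) ^ 2 * Y.card ≤ ∑ p ∈ A ×ˢ A, (c p : ℝ) := by
    rw [hsumc]
    rw [← mul_le_mul_iff_of_pos_left hYpos]
    calc (Y.card : ℝ) * (α ^ 2 * A.card ^ 2 * Y.card) = (α * A.card * Y.card) ^ 2 := by ring
      _ ≤ (∑ y ∈ Y, (d y : ℝ)) ^ 2 := by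
          apply pow_le_pow_left₀ (by positivity) hlb
      _ ≤ _ := hCS
  -- define P
  set P := (A ×ˢ A).filter (fun p => (α ^ 2 / 2) * Y.card ≤ (c p : ℝ)) with hP
  refine ⟨P, Finset.filter_subset _ _, ?_, ?_⟩
  · -- cardinality bound
    have hsplit : ∑ p ∈ A ×ˢ A, (c p : ℝ)
        ≤ P.card * Y.card + (A.card : ℝ) ^ 2 * ((α ^ 2 / 2) * Y.card) := by
      rw [← Finset.sum_filter_add_sum_filter_not (A ×ˢ A) (fun p => (α ^ 2 / 2) * Y.card ≤ (c p : ℝ))]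
      gcongr ?_ + ?_
      · calc ∑ p ∈ P, (c p : ℝ) ≤ ∑ _p ∈ P, (Y.card : ℝ) := by
              apply Finset.sum_le_sum
              intro p _
              exact_mod_cast Finset.card_le_card (Finset.inter_subset_left.trans Finset.inter_subset_left)
          _ = P.card * Y.card := by rw [Finset.sum_const, nsmul_eq_mul]
      · calc ∑ p ∈ (A ×ˢ A).filter (fun p => ¬ ((α ^ 2 / 2) * Y.card ≤ (c p : ℝ))), (c p : ℝ)
            ≤ ∑ _p ∈ (A ×ˢ A).filter (fun p => ¬ ((α ^ 2 / 2) * Y.card ≤ (c p : ℝ))), ((α ^ 2 / 2) * Y.card) := by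
              apply Finset.sum_le_sum
              intro p hp
              exact le_of_lt (lt_of_not_ge (Finset.mem_filter.mp hp).2)
          _ ≤ (A.card : ℝ) ^ 2 * ((α ^ 2 / 2) * Y.card) := by
              rw [Finset.sum_const, nsmul_eq_mul]
              apply mul_le_mul_of_nonneg_right _ (by positivity)
              calc (((A ×ˢ A).filter _).card : ℝ) ≤ ((A ×ˢ A).card : ℝ) := by
                    exact_mod_cast Finset.card_le_card (Finset.filter_subset _ _)
                _ = (A.card : ℝ) ^ 2 := by rw [Finset.card_product]; push_cast; ring
    have := hmain.trans hsplit
    have h2 : (α ^ 2 / 2) * (A.card : ℝ) ^ 2 * Y.card ≤ P.card * Y.card := by nlinarith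
    rw [mul_le_mul_iff_of_pos_right hYpos] at h2
    exact h2
  · intro p hp
    rw [hP, Finset.mem_filter] at hp
    obtain ⟨hpA, hcp⟩ := hp
    constructor
    · refine hcp.trans ?_
      exact_mod_cast key_lemma Y p.1 p.2
    · refine hcp.trans ?_
      have : c p = (Y ∩ Y.image (fun y => p.2 • y) ∩ Y.image (fun y => p.1 • y)).card := by
        rw [hc]; simp only []; rw [Finset.inter_right_comm]
      rw [this]
      exact_mod_cast key_lemma Y p.2 p.1
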